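/- Let {α(n)} be a sequence of positive reals with α(0) ≥ 1 that is equivalent to a sequence {λ(n)} such that {λ(n)/n!} is log-concave. Then there exists a constant c ≥ 1 such that α(n+m) ≤ c^{n+m} α(n) α(m) for all n, m ≥ 0. -/

import Mathlib

private lemma choose_le_two_pow' (n k : ℕ) : n.choose k ≤ 2 ^ n := by
  rcases le_or_gt k n with h | h
  · calc n.choose k ≤ ∑ m ∈ Finset.range (n+1), n.choose m :=
        Finset.single_le_sum (fun _ _ => Nat.zero_le _)
          (Finset.mem_range.mpr (Nat.lt_succ_of_le h))
    _ = 2 ^ n := Nat.sum_range_choose n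
  · rw [Nat.choose_eq_zero_of_lt h]; exact Nat.zero_le _

private lemma fact_le (n m : ℕ) : ((n + m).factorial : ℝ) ≤ 2 ^ (n + m) * n.factorial * m.factorial := by
  have h : (n + m).factorial ≤ 2 ^ (n + m) * n.factorial * m.factorial := by
    calc (n + m).factorial = (n + m).choose m * n.factorial * m.factorial := by
          rw [← Nat.add_choose_mul_factorial_mul_factorial n m]
      _ ≤ 2 ^ (n + m) * n.factorial * m.factorial := by
          gcongr
          exact choose_le_two_pow' _ _
  exact_mod_cast h

theorem near_B2_implies_C2 (α lam : ℕ → ℝ)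
    (hα : ∀ n, 0 < α n) (hlam : ∀ n, 0 < lam n)
    (hα0 : 1 ≤ α 0)
    (hequiv : ∃ K₁ > (0 : ℝ), ∃ K₂ > (0 : ℝ), ∃ c₁ > (0 : ℝ), ∃ c₂ > (0 : ℝ),
      ∀ n : ℕ, K₁ * c₁ ^ n * lam n ≤ α n ∧ α n ≤ K₂ * c₂ ^ n * lam n)
    (hlc : ∀ n : ℕ,
      (lam n / n.factorial) * (lam (n + 2) / (n + 2).factorial)
        ≤ (lam (n + 1) / (n + 1).factorial) ^ 2) :
    ∃ c ≥ (1 : ℝ), ∀ n m : ℕ, α (n + m) ≤ c ^ (n + m) * α n * α m := by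
  obtain ⟨K₁, hK₁, K₂, hK₂, c₁, hc₁, c₂, hc₂, hKb⟩ := hequiv
  set γ : ℕ → ℝ := fun n => lam n / n.factorial with hγ
  have hγpos : ∀ n, 0 < γ n := fun n =>
    div_pos (hlam n) (by exact_mod_cast Nat.factorial_pos n)
  -- ratio monotonicity
  have hratio : ∀ a k : ℕ, γ (a + k + 1) * γ a ≤ γ (a + k) * γ (a + 1) := by
    intro a k
    induction k with
    | zero => ring_nf; exact le_refl _
    | succ k ih =>
        have hlc' := hlc (a + k)
        have h1 := hγpos (a + k)
        have h2 := hγpos (a + k + 1)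
        have h3 := hγpos (a + k + 2)
        have h4 := hγpos a
        have h5 := hγpos (a + 1)
        have goal : γ (a + k + 2) * γ a ≤ γ (a + k + 1) * γ (a + 1) := by
          have key : γ (a + k + 2) * γ a * γ (a + k) ≤ γ (a + k + 1) * γ (a + 1) * γ (a + k) := by
            nlinarith [mul_le_mul_of_nonneg_left ih (le_of_lt h2)]
          exact le_of_mul_le_mul_right key h1
        calc γ (a + (k + 1) + 1) * γ a = γ (a + k + 2) * γ a := by ring_nf
          _ ≤ γ (a + k + 1) * γ (a + 1) := goal
          _ = γ (a + (k + 1)) * γ (a + 1) := by ring_nf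
  -- submultiplicativity of γ up to γ 0
  have hsub : ∀ n m : ℕ, γ (n + m) * γ 0 ≤ γ n * γ m := by
    intro n m
    induction n with
    | zero => simp [mul_comm]
    | succ n ih =>
        have hr := hratio n m
        have h1 := hγpos n
        have h2 := hγpos (n + m)
        have h3 := hγpos (n + m + 1)
        have h0 := hγpos 0
        have h4 := hγpos (n + 1)
        have key : γ (n + 1 + m) * γ 0 * γ n ≤ γ (n + 1) * γ m * γ n := by
          have e : n + 1 + m = n + m + 1 := by ring
          rw [e]
          nlinarith [mul_le_mul_of_nonneg_left ih (le_of_lt h4),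
            mul_le_mul_of_nonneg_left hr (le_of_lt h0)]
        exact le_of_mul_le_mul_right key h1
  -- the constant
  set A : ℝ := K₂ / (lam 0 * K₁ ^ 2) with hA
  set B : ℝ := 2 * c₂ / c₁ with hB
  have hApos : 0 < A := div_pos hK₂ (mul_pos (hlam 0) (pow_pos hK₁ 2))
  have hBpos : 0 < B := div_pos (by linarith) hc₁
  have hmA : (1:ℝ) ≤ max A 1 := le_max_right _ _
  have hmB : (1:ℝ) ≤ max B 1 := le_max_right _ _
  refine ⟨max A 1 * max B 1, by nlinarith, ?_⟩
  intro n m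
  rcases Nat.eq_zero_or_pos (n + m) with hnm | hnm
  · obtain ⟨hn0, hm0⟩ := Nat.add_eq_zero.mp hnm
    subst hn0; subst hm0
    simp only [Nat.add_zero, pow_zero, one_mul]
    nlinarith [hα 0]
  -- main case: n + m ≥ 1
  set N := n + m with hN
  have hγineq := hsub n m
  have hfac := fact_le n m
  have hfn : (0:ℝ) < (n.factorial : ℝ) := by exact_mod_cast Nat.factorial_pos n
  have hfm : (0:ℝ) < (m.factorial : ℝ) := by exact_mod_cast Nat.factorial_pos m
  have hfN : (0:ℝ) < (N.factorial : ℝ) := by exact_mod_cast Nat.factorial_pos N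
  -- lam N * lam 0 ≤ 2^N * (lam n * lam m)
  have h4 : lam N * lam 0 ≤ 2 ^ N * (lam n * lam m) := by
    have hγ0 : γ 0 = lam 0 := by simp [hγ]
    have h2 : lam N / N.factorial * lam 0 ≤ lam n / n.factorial * (lam m / m.factorial) := by
      have := hγineq; rw [hγ0] at this; exact this
    rw [div_mul_eq_mul_div, div_le_iff₀ hfN] at h2
    have hnn : (0:ℝ) ≤ lam n / ↑n.factorial * (lam m / ↑m.factorial) :=
      le_of_lt (mul_pos (div_pos (hlam n) hfn) (div_pos (hlam m) hfm))
    have h3 := mul_le_mul_of_nonneg_left hfac hnn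
    have h5 : lam n / ↑n.factorial * (lam m / ↑m.factorial) * (2 ^ N * ↑n.factorial * ↑m.factorial)
        = 2 ^ N * (lam n * lam m) := by
      field_simp
    calc lam N * lam 0 ≤ lam n / ↑n.factorial * (lam m / ↑m.factorial) * ↑N.factorial := h2
      _ ≤ lam n / ↑n.factorial * (lam m / ↑m.factorial) * (2 ^ N * ↑n.factorial * ↑m.factorial) := by
          have := h3; linarith [mul_le_mul_of_nonneg_left hfac hnn]
      _ = 2 ^ N * (lam n * lam m) := h5
  have hb1 := (hKb N).2
  have hb2 := (hKb n).1
  have hb3 := (hKb m).1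
  have hPpos : (0:ℝ) < lam 0 * K₁ ^ 2 * c₁ ^ N :=
    mul_pos (mul_pos (hlam 0) (pow_pos hK₁ 2)) (pow_pos hc₁ N)
  have key : α N * (lam 0 * K₁ ^ 2 * c₁ ^ N)
      ≤ (max A 1 * max B 1) ^ N * α n * α m * (lam 0 * K₁ ^ 2 * c₁ ^ N) := by
    calc α N * (lam 0 * K₁ ^ 2 * c₁ ^ N)
        ≤ K₂ * c₂ ^ N * lam N * (lam 0 * K₁ ^ 2 * c₁ ^ N) :=
          mul_le_mul_of_nonneg_right hb1 (le_of_lt hPpos)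
      _ = K₂ * c₂ ^ N * K₁ ^ 2 * c₁ ^ N * (lam N * lam 0) := by ring
      _ ≤ K₂ * c₂ ^ N * K₁ ^ 2 * c₁ ^ N * (2 ^ N * (lam n * lam m)) :=
          mul_le_mul_of_nonneg_left h4
            (le_of_lt (mul_pos (mul_pos (mul_pos hK₂ (pow_pos hc₂ N)) (pow_pos hK₁ 2)) (pow_pos hc₁ N)))
      _ = K₂ * (2 * c₂) ^ N * ((K₁ * c₁ ^ n * lam n) * (K₁ * c₁ ^ m * lam m)) := by
          rw [hN]; ring
      _ ≤ K₂ * (2 * c₂) ^ N * (α n * α m) :=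
          mul_le_mul_of_nonneg_left
            (mul_le_mul hb2 hb3
              (le_of_lt (mul_pos (mul_pos hK₁ (pow_pos hc₁ m)) (hlam m)))
              (le_of_lt (hα n)))
            (le_of_lt (mul_pos hK₂ (pow_pos (by linarith : (0:ℝ) < 2 * c₂) N)))
      _ = A * B ^ N * (α n * α m) * (lam 0 * K₁ ^ 2 * c₁ ^ N) := by
          rw [hA, hB, div_pow]
          field_simp
          exact (mul_div_cancel_right₀ _ (hlam 0).ne').symm
      _ ≤ (max A 1 * max B 1) ^ N * α n * α m * (lam 0 * K₁ ^ 2 * c₁ ^ N) := by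
          have hAB : A * B ^ N ≤ (max A 1 * max B 1) ^ N := by
            rw [mul_pow]
            have h1 : A ≤ (max A 1) ^ N :=
              le_trans (le_max_left A 1) (le_self_pow₀ hmA hnm.ne')
            have h2 : B ^ N ≤ (max B 1) ^ N :=
              pow_le_pow_left₀ hBpos.le (le_max_left B 1) N
            exact mul_le_mul h1 h2 (pow_nonneg hBpos.le N)
              (pow_nonneg (le_trans zero_le_one hmA) N)
          have hrest : (0:ℝ) ≤ α n * α m * (lam 0 * K₁ ^ 2 * c₁ ^ N) :=
            le_of_lt (mul_pos (mul_pos (hα n) (hα m)) hPpos)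
          calc A * B ^ N * (α n * α m) * (lam 0 * K₁ ^ 2 * c₁ ^ N)
              = A * B ^ N * (α n * α m * (lam 0 * K₁ ^ 2 * c₁ ^ N)) := by ring
            _ ≤ (max A 1 * max B 1) ^ N * (α n * α m * (lam 0 * K₁ ^ 2 * c₁ ^ N)) :=
              mul_le_mul_of_nonneg_right hAB hrest
            _ = (max A 1 * max B 1) ^ N * α n * α m * (lam 0 * K₁ ^ 2 * c₁ ^ N) := by ring
  exact le_of_mul_le_mul_right key hPpos
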